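/- Let q ≥ 5 be an odd integer. For j ∈ {2, (q+1)/2, q-1}, the set S(j) = { a + b·j + c·q : a, b, c ∈ ℕ with a + b + c ≤ (q-3)/2 } has exactly (q-1)^2/4 elements. -/

import Mathlib

lemma aux_card_union (N : ℕ) (s L : ℕ → ℕ)
    (hd : ∀ i k, i < k → k < N → s i + L i ≤ s k) :
    {x : ℕ | ∃ i, i < N ∧ ∃ t, t < L i ∧ x = s i + t}.ncard
      = ∑ i ∈ Finset.range N, L i := by
  have hset : {x : ℕ | ∃ i, i < N ∧ ∃ t, t < L i ∧ x = s i + t}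
      = ↑((Finset.range N).biUnion (fun i => Finset.Ico (s i) (s i + L i))) := by
    ext x
    simp only [Set.mem_setOf_eq, Finset.coe_biUnion, Finset.coe_Ico, Finset.mem_coe,
      Finset.mem_biUnion, Finset.mem_Ico, Finset.mem_range, Set.mem_iUnion, Set.mem_Ico]
    constructor
    · rintro ⟨i, hi, t, ht, rfl⟩
      exact ⟨i, hi, Nat.le_add_right _ _, by omega⟩
    · rintro ⟨i, hi, h1, h2⟩
      exact ⟨i, hi, x - s i, by omega, by omega⟩
  rw [hset, Set.ncard_coe_finset]
  rw [Finset.card_biUnion]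
  · apply Finset.sum_congr rfl
    intro i _
    rw [Nat.card_Ico]
    omega
  · intro i hi k hk hik
    simp only [Finset.mem_coe, Finset.mem_range] at hi hk
    rw [Function.onFun, Finset.disjoint_left]
    intro x hx hx'
    simp only [Finset.mem_Ico] at hx hx'
    rcases lt_or_gt_of_ne hik with h | h
    · have := hd i k h hk; omega
    · have := hd k i h hi; omega

lemma aux_sum_odd (m : ℕ) :
    ∑ c ∈ Finset.range (m+1), (2*(m-c)+1) = (m+1)^2 := by
  induction m with
  | zero => simp
  | succ m ih =>
    rw [Finset.sum_range_succ]
    have h : ∀ c ∈ Finset.range (m+1), 2*(m+1-c)+1 = (2*(m-c)+1) + 2 := by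
      intro c hc
      simp only [Finset.mem_range] at hc
      omega
    rw [Finset.sum_congr rfl h, Finset.sum_add_distrib, ih, Finset.sum_const,
      Finset.card_range, smul_eq_mul]
    have : (m+1+1)^2 = (m+1)^2 + (m+1)*2 + 1 := by ring
    omega

lemma aux_sum_half (m : ℕ) :
    ∑ u ∈ Finset.range (2*m+1), ((2*m+2-u)/2) = (m+1)^2 := by
  induction m with
  | zero => simp
  | succ m ih =>
    have hN : 2*(m+1)+1 = (2*m+1) + 1 + 1 := by ring
    rw [hN, Finset.sum_range_succ, Finset.sum_range_succ]
    have h : ∀ u ∈ Finset.range (2*m+1), (2*(m+1)+2-u)/2 = ((2*m+2-u)/2) + 1 := by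
      intro u hu
      simp only [Finset.mem_range] at hu
      omega
    rw [Finset.sum_congr rfl h, Finset.sum_add_distrib, ih, Finset.sum_const,
      Finset.card_range, smul_eq_mul]
    have : (m+1+1)^2 = (m+1)^2 + (2*m+1)*1 + 2 := by ring
    omega

/-- Let `q ≥ 5` be odd. For `j ∈ {2, (q+1)/2, q-1}`, the set
`S(j) = {a + b·j + c·q : a, b, c ∈ ℕ, a + b + c ≤ (q-3)/2}` has exactly
`(q-1)^2/4` elements. -/
theorem card_canonical_orders_set
    (q : ℕ) (hq : 5 ≤ q) (hodd : Odd q)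
    (j : ℕ) (hj : j = 2 ∨ j = (q + 1) / 2 ∨ j = q - 1) :
    {x : ℕ | ∃ a b c : ℕ, a + b + c ≤ (q - 3) / 2 ∧ x = a + b * j + c * q}.ncard
      = (q - 1) ^ 2 / 4 := by
  obtain ⟨m, hm, hm1⟩ : ∃ m, q = 2*m+3 ∧ 1 ≤ m := by
    obtain ⟨k, hk⟩ := hodd
    exact ⟨(q-3)/2, by omega, by omega⟩
  subst hm
  rw [show (2*m+3-3)/2 = m by omega, show (2*m+3-1) = 2*m+2 by omega,
    show (2*m+2)^2 = (m+1)^2*4 by ring, Nat.mul_div_cancel _ (by norm_num)]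
  have hj' : j = 2 ∨ j = m+2 ∨ j = 2*m+2 := by omega
  clear hj
  rcases hj' with rfl | rfl | rfl
  · -- j = 2
    have hset : {x : ℕ | ∃ a b c : ℕ, a + b + c ≤ m ∧ x = a + b * 2 + c * (2*m+3)}
        = {x : ℕ | ∃ i, i < m+1 ∧ ∃ t, t < 2*(m-i)+1 ∧ x = i*(2*m+3) + t} := by
      ext x
      simp only [Set.mem_setOf_eq]
      constructor
      · rintro ⟨a, b, c, h1, rfl⟩
        exact ⟨c, by omega, a + b*2, by omega, by omega⟩
      · rintro ⟨i, hi, t, ht, rfl⟩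
        exact ⟨t % 2, t / 2, i, by omega, by omega⟩
    rw [hset, aux_card_union (m+1) (fun i => i*(2*m+3)) (fun i => 2*(m-i)+1), aux_sum_odd]
    intro i k hik hk
    obtain ⟨d, rfl⟩ : ∃ d, k = i + d + 1 := ⟨k - i - 1, by omega⟩
    have e1 : (i+d+1)*(2*m+3) = i*(2*m+3) + d*(2*m+3) + (2*m+3) := by ring
    omega
  · -- j = m+2
    have hset : {x : ℕ | ∃ a b c : ℕ, a + b + c ≤ m ∧ x = a + b * (m+2) + c * (2*m+3)}
        = {x : ℕ | ∃ i, i < 2*m+1 ∧ ∃ t, t < (2*m+2-i)/2 ∧ x = (i*(m+1) + (i+1)/2) + t} := by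
      ext x
      simp only [Set.mem_setOf_eq]
      constructor
      · rintro ⟨a, b, c, h1, rfl⟩
        have e1 : (b+2*c)*(m+1) + (b+2*c) = b*(m+2) + c*(2*m+3) + c := by ring
        exact ⟨b+2*c, by omega,
          a + b*(m+2) + c*(2*m+3) - ((b+2*c)*(m+1) + (b+2*c+1)/2), by omega, by omega⟩
      · rintro ⟨u, hu, t, ht, rfl⟩
        rcases le_or_gt (u/2) t with h | h
        · refine ⟨t - u/2, u, 0, by omega, ?_⟩
          have e2 : u*(m+2) = u*(m+1) + u := by ring
          have e3 : 0*(2*m+3) = 0 := by ring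
          omega
        · obtain ⟨cc, b2, h5, h6⟩ : ∃ cc b2, u/2 = cc + t ∧ u = 2*cc + b2 :=
            ⟨u/2 - t, u - 2*(u/2 - t), by omega, by omega⟩
          subst h6
          refine ⟨0, b2, cc, by omega, ?_⟩
          have e5 : b2*(m+2) + (cc*(2*m+3) + cc) = (2*cc+b2)*(m+2) := by ring
          have e6 : (2*cc+b2)*(m+2) = (2*cc+b2)*(m+1) + (2*cc+b2) := by ring
          omega
    rw [hset, aux_card_union (2*m+1) (fun i => i*(m+1) + (i+1)/2) (fun i => (2*m+2-i)/2),
      aux_sum_half]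
    intro i k hik hk
    obtain ⟨d, rfl⟩ : ∃ d, k = i + d + 1 := ⟨k - i - 1, by omega⟩
    have e1 : (i+d+1)*(m+1) = i*(m+1) + d*(m+1) + (m+1) := by ring
    omega
  · -- j = 2m+2
    have hset : {x : ℕ | ∃ a b c : ℕ, a + b + c ≤ m ∧ x = a + b * (2*m+2) + c * (2*m+3)}
        = {x : ℕ | ∃ i, i < m+1 ∧ ∃ t, t < m+1 ∧ x = i*(2*m+2) + t} := by
      ext x
      simp only [Set.mem_setOf_eq]
      constructor
      · rintro ⟨a, b, c, h1, rfl⟩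
        have e1 : (b+c)*(2*m+2) + (a+c) = a + b*(2*m+2) + c*(2*m+3) := by ring
        exact ⟨b+c, by omega, a+c, by omega, by omega⟩
      · rintro ⟨i, hi, t, ht, rfl⟩
        rcases le_total i t with h | h
        · refine ⟨t - i, 0, i, by omega, ?_⟩
          have e1 : i*(2*m+3) = i*(2*m+2) + i := by ring
          have e2 : 0*(2*m+2) = 0 := by ring
          omega
        · obtain ⟨d, rfl⟩ : ∃ d, i = d + t := ⟨i - t, by omega⟩
          refine ⟨0, d, t, by omega, ?_⟩
          have e1 : d*(2*m+2) + t*(2*m+3) = (d+t)*(2*m+2) + t := by ring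
          omega
    rw [hset, aux_card_union (m+1) (fun i => i*(2*m+2)) (fun i => m+1)]
    · rw [Finset.sum_const, Finset.card_range, smul_eq_mul]
      ring
    · intro i k hik hk
      obtain ⟨d, rfl⟩ : ∃ d, k = i + d + 1 := ⟨k - i - 1, by omega⟩
      have e1 : (i+d+1)*(2*m+2) = i*(2*m+2) + d*(2*m+2) + (2*m+2) := by ring
      omega
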